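/- Let f : ℝⁿ → ℝⁿ. Assume: (i) every function ι g for g ∈ H is real analytic on ℝⁿ; (ii) for every x ∈ ℝⁿ and every v ∈ ℝⁿ the linear functional g ↦ D(ι g)(x) v is continuous on H; (iii) the gradients are universal, i.e., for every x ∈ ℝⁿ and every nonzero v ∈ ℝⁿ there exists g ∈ H with D(ι g)(x) v ≠ 0; and (iv) the domain D(A_f) is dense in H. Then f is real analytic on ℝⁿ, i.e., every component function x ↦ (f x)_i is real analytic on ℝⁿ. -/

import Mathlib

open scoped RealInnerProductSpace

/-- Determinant of a matrix with analytic entries is analytic. -/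
private lemma analyticAt_det' {E : Type*} [NormedAddCommGroup E] [NormedSpace ℝ E]
    {m : ℕ} {M : E → Matrix (Fin m) (Fin m) ℝ} {x : E}
    (h : ∀ i j, AnalyticAt ℝ (fun y => M y i j) x) :
    AnalyticAt ℝ (fun y => (M y).det) x := by
  simp_rw [Matrix.det_apply, Units.smul_def, zsmul_eq_mul]
  apply Finset.analyticAt_fun_sum
  intro σ _
  exact analyticAt_const.mul (Finset.analyticAt_fun_prod _ fun i _ => h (σ i) i)

/-- If every `ι g` is real analytic, directional-derivative functionals are continuous,
the gradients are universal, and the domain of the Liouville operator `A_f` is dense,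
then the symbol `f` is real analytic (componentwise). -/
theorem symbol_of_densely_defined_liouville_real_analytic
    {n : ℕ} (hn : 1 ≤ n) {H : Type*} [NormedAddCommGroup H] [InnerProductSpace ℝ H]
    [CompleteSpace H]
    (ι : H →ₗ[ℝ] (EuclideanSpace ℝ (Fin n) → ℝ)) (hι : Function.Injective ι)
    (k : EuclideanSpace ℝ (Fin n) → H)
    (hrep : ∀ (g : H) (x : EuclideanSpace ℝ (Fin n)), ι g x = ⟪g, k x⟫)
    (f : EuclideanSpace ℝ (Fin n) → EuclideanSpace ℝ (Fin n))
    (hanalytic : ∀ (g : H) (x : EuclideanSpace ℝ (Fin n)), AnalyticAt ℝ (ι g) x)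
    (hcont : ∀ (x v : EuclideanSpace ℝ (Fin n)),
      Continuous (fun g : H => fderiv ℝ (ι g) x v))
    (huniv : ∀ (x v : EuclideanSpace ℝ (Fin n)), v ≠ 0 →
      ∃ g : H, fderiv ℝ (ι g) x v ≠ 0)
    (hdense : Dense {g : H | ∃ Ag : H,
      ∀ x : EuclideanSpace ℝ (Fin n), ι Ag x = fderiv ℝ (ι g) x (f x)}) :
    ∀ (i : Fin n) (x : EuclideanSpace ℝ (Fin n)), AnalyticAt ℝ (fun y => f y i) x := by
  intro i x
  have hdiff : ∀ (g : H) (y : EuclideanSpace ℝ (Fin n)), DifferentiableAt ℝ (ι g) y :=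
    fun g y => (hanalytic g y).differentiableAt
  set e : Fin n → EuclideanSpace ℝ (Fin n) := fun l => EuclideanSpace.single l 1 with he
  -- expansion of directional derivatives in the coordinate basis
  have hkey : ∀ (g : H) (y v : EuclideanSpace ℝ (Fin n)), fderiv ℝ (ι g) y v = ∑ l, v l * fderiv ℝ (ι g) y (e l) := by
    intro g y v
    have hv : v = ∑ l, v l • e l := by
      have h0 := (EuclideanSpace.basisFun (Fin n) ℝ).sum_repr v
      simp only [EuclideanSpace.basisFun_repr, EuclideanSpace.basisFun_apply] at h0
      rw [he]
      exact h0.symm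
    conv_lhs => rw [hv]
    rw [map_sum]
    simp [smul_eq_mul]
  -- the linear map collecting the partial derivatives at x
  let T : H →ₗ[ℝ] EuclideanSpace ℝ (Fin n) :=
    { toFun := fun g => (WithLp.toLp 2 (fun l => fderiv ℝ (ι g) x (e l)) : EuclideanSpace ℝ (Fin n))
      map_add' := by
        intro a b
        ext l
        show fderiv ℝ (ι (a + b)) x (e l) = fderiv ℝ (ι a) x (e l) + fderiv ℝ (ι b) x (e l)
        rw [map_add ι a b, fderiv_add (hdiff a x) (hdiff b x)]
        rfl
      map_smul' := by
        intro c a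
        ext l
        show fderiv ℝ (ι (c • a)) x (e l) = c • fderiv ℝ (ι a) x (e l)
        rw [map_smul ι c a, fderiv_const_smul (hdiff a x) c]
        rfl }
  have hTsurj : Function.Surjective T := by
    rw [← LinearMap.range_eq_top]
    by_contra hne
    rw [← Submodule.orthogonal_eq_bot_iff] at hne
    obtain ⟨v, hvmem, hv0⟩ := Submodule.exists_mem_ne_zero_of_ne_bot hne
    obtain ⟨g, hg⟩ := huniv x v hv0
    apply hg
    have h1 : ⟪T g, v⟫ = 0 :=
      Submodule.mem_orthogonal _ v |>.mp hvmem _ (LinearMap.mem_range_self T g)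
    rw [hkey g x v, ← h1]
    simp [PiLp.inner_apply, T, mul_comm]
  obtain ⟨hfun, hh⟩ := Classical.axiomOfChoice (fun j => hTsurj (e j))
  -- choose g's in the dense domain with invertible derivative matrix at x
  set D := {g : H | ∃ Ag : H, ∀ y : EuclideanSpace ℝ (Fin n), ι Ag y = fderiv ℝ (ι g) y (f y)} with hD
  let Mat : (Fin n → H) → Matrix (Fin n) (Fin n) ℝ :=
    fun G => Matrix.of fun j l => fderiv ℝ (ι (G j)) x (e l)
  have hC : Continuous fun G => (Mat G).det :=
    (continuous_matrix fun j l => (hcont x (e l)).comp (continuous_apply j)).matrix_det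
  have hopen : IsOpen {G : Fin n → H | (Mat G).det ≠ 0} :=
    isOpen_compl_singleton.preimage hC
  have hMat_h : Mat hfun = 1 := by
    ext j l
    have : T (hfun j) l = e j l := by rw [hh j]
    simp only [Mat, Matrix.of_apply]
    rw [show fderiv ℝ (ι (hfun j)) x (e l) = T (hfun j) l from rfl, this]
    simp [he, EuclideanSpace.single_apply, Matrix.one_apply, eq_comm]
  have hDn : Dense {G : Fin n → H | ∀ j, G j ∈ D} := by
    have := dense_pi (ι := Fin n) (s := fun _ => D) Set.univ (fun j _ => hdense)
    simpa [Set.pi] using this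
  obtain ⟨G, hGopen, hGD⟩ := hDn.inter_open_nonempty _ hopen ⟨hfun, by simp [hMat_h]⟩
  choose Ag hAg using fun j => (hGD j)
  -- the derivative matrix as a function of the base point
  set M : EuclideanSpace ℝ (Fin n) → Matrix (Fin n) (Fin n) ℝ :=
    fun y => Matrix.of fun j l => fderiv ℝ (ι (G j)) y (e l) with hM
  have hMentry : ∀ (y : EuclideanSpace ℝ (Fin n)) (j l : Fin n), AnalyticAt ℝ (fun z => M z j l) y := by
    intro y j l
    exact ((ContinuousLinearMap.apply ℝ ℝ (e l)).analyticAt _).comp (hanalytic (G j) y).fderiv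
  have hdet : ∀ y, AnalyticAt ℝ (fun z => (M z).det) y :=
    fun y => analyticAt_det' (fun j l => hMentry y j l)
  have hdetx : (M x).det ≠ 0 := hGopen
  have hev : ∀ᶠ y in nhds x, (M y).det ≠ 0 := (hdet x).continuousAt.eventually_ne hdetx
  -- Cramer formula for f on the set where the matrix is invertible
  have heq : ∀ y : EuclideanSpace ℝ (Fin n), (M y).det ≠ 0 →
      f y i = ∑ j, ((M y).det)⁻¹ * (M y).adjugate i j * ι (Ag j) y := by
    intro y hy
    have hunit : IsUnit (M y).det := isUnit_iff_ne_zero.mpr hy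
    have hmv : (M y).mulVec (fun l => f y l) = fun j => ι (Ag j) y := by
      funext j
      simp only [Matrix.mulVec, dotProduct]
      rw [hAg j y, hkey (G j) y (f y)]
      exact Finset.sum_congr rfl fun l _ => mul_comm _ _
    have hfv : (fun l => f y l) = (M y)⁻¹.mulVec (fun j => ι (Ag j) y) := by
      rw [← hmv, Matrix.mulVec_mulVec, Matrix.nonsing_inv_mul _ hunit, Matrix.one_mulVec]
    have h2 := congrFun hfv i
    rw [h2]
    simp [Matrix.mulVec, dotProduct, Matrix.inv_def, Ring.inverse_eq_inv',
      Matrix.smul_apply, smul_eq_mul]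
  -- analyticity of the Cramer expression
  have hA : AnalyticAt ℝ (fun y => ∑ j, ((M y).det)⁻¹ * (M y).adjugate i j * ι (Ag j) y) x := by
    apply Finset.analyticAt_fun_sum
    intro j _
    refine (((hdet x).inv hdetx).mul ?_).mul (hanalytic (Ag j) x)
    simp_rw [Matrix.adjugate_apply]
    apply analyticAt_det'
    intro a b
    by_cases hab : a = j
    · simp only [Matrix.updateRow_apply, hab, if_pos rfl]
      exact analyticAt_const
    · simp only [Matrix.updateRow_apply, if_neg hab]
      exact hMentry x a b
  exact hA.congr (by filter_upwards [hev] with y hy using (heq y hy).symm)
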